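/- Let m ≥ 2 be an integer and let α > 2/m be a real number. The quartic polynomial P_{m,α} has exactly one real root in the interval (1 − 1/(m+α), ∞), i.e., there exists a unique γ > 1 − 1/(m+α) with P_{m,α}(γ) = 0. -/

import Mathlib

/-- The quartic polynomial `P_{m,α}(γ)` from the analysis of the lower solution. -/
noncomputable def Pquartic (m : ℕ) (α : ℝ) (γ : ℝ) : ℝ :=
  ((m : ℝ) + α) ^ 3 * γ ^ 4
    + (-(((m : ℝ) + α) ^ 2 * ((m : ℝ) + α + 1))) * γ ^ 3
    + (((m : ℝ) + α) * (2 * (m : ℝ) + 6 * α - 4 * (m : ℝ) * α - 1)) * γ ^ 2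
    + (4 * (m : ℝ) ^ 2 * α + 4 * α ^ 2 * (m : ℝ) - 4 * α ^ 2 - 5 * α - (m : ℝ) + 1) * γ
    + (-(8 * ((m : ℝ) - 1) * α))

set_option maxHeartbeats 1000000 in
/-- For `m ≥ 2` and `α > 2/m`, the quartic `P_{m,α}` has exactly one real root in the
interval `(1 − 1/(m+α), ∞)`. -/
theorem P_unique_root_right (m : ℕ) (hm : 2 ≤ m) (α : ℝ) (hα : 2 / (m : ℝ) < α) :
    ∃! γ : ℝ, 1 - 1 / ((m : ℝ) + α) < γ ∧ Pquartic m α γ = 0 := by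
  have hm2 : (2 : ℝ) ≤ (m : ℝ) := by exact_mod_cast hm
  have hm0 : (0 : ℝ) < (m : ℝ) := by linarith
  have hα0 : 0 < α := lt_trans (by positivity) hα
  have hma : 2 < (m : ℝ) * α := by
    rw [div_lt_iff₀ hm0] at hα; linarith [hα]
  set M : ℝ := (m : ℝ) with hM
  set s : ℝ := M + α with hs
  have hs2 : 2 < s := by simp only [hs]; linarith
  have hs0 : 0 < s := by linarith
  set t0 : ℝ := 1 - 1 / s with ht0
  -- abbreviations for the coefficients
  set A4 : ℝ := s ^ 3 with hA4
  set A3 : ℝ := -(s ^ 2 * (s + 1)) with hA3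
  set A2 : ℝ := s * (2 * M + 6 * α - 4 * M * α - 1) with hA2
  set A1 : ℝ := 4 * M ^ 2 * α + 4 * α ^ 2 * M - 4 * α ^ 2 - 5 * α - M + 1 with hA1
  set A0 : ℝ := -(8 * (M - 1) * α) with hA0
  have hPdef : Pquartic m α = fun x : ℝ =>
      A4 * x ^ 4 + A3 * x ^ 3 + A2 * x ^ 2 + A1 * x + A0 := rfl
  -- continuity
  have hcont : Continuous (Pquartic m α) := by
    rw [hPdef]; continuity
  -- derivative
  have hD : ∀ x : ℝ, HasDerivAt (Pquartic m α)
      (4 * A4 * x ^ 3 + 3 * A3 * x ^ 2 + 2 * A2 * x + A1) x := by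
    intro x
    rw [hPdef]
    have h4 := (hasDerivAt_pow 4 x).const_mul A4
    have h3 := (hasDerivAt_pow 3 x).const_mul A3
    have h2 := (hasDerivAt_pow 2 x).const_mul A2
    have h1 := (hasDerivAt_id x).const_mul A1
    have := (((h4.add h3).add h2).add h1).add_const A0
    convert this using 1
    exacts [rfl, rfl, rfl, by ring]
  -- the key coefficient positivity facts
  have hC1 : 0 < 6 * M ^ 2 + 4 * M * α + 6 * α ^ 2 - 20 * M - 12 * α + 16 := by
    nlinarith [sq_nonneg (M - 2), sq_nonneg (α - 1), hma, hm2]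
  have hC0 : 0 < M ^ 3 - 5 * M ^ 2 + 8 * M - 4 - M ^ 2 * α + 6 * M * α - 4 * α
      - M * α ^ 2 - α ^ 2 + α ^ 3 := by
    rcases le_or_gt (M - 1) α with hβ | hβ
    · -- α ≥ M - 1, all terms of the shifted cubic are nonneg
      have hb : 0 ≤ α - M + 1 := by linarith
      nlinarith [mul_nonneg (mul_nonneg hb hb) hb,
        mul_nonneg (sq_nonneg (α - M + 1)) (by linarith : (0:ℝ) ≤ 2 * M - 4), hb, hm2]
    · -- α < M - 1; then m ≥ 3
      have hm3 : (3 : ℝ) ≤ M := by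
        rcases eq_or_lt_of_le hm with h | h
        · exfalso
          have : M = 2 := by rw [hM, ← h]; norm_num
          rw [this] at hma hβ
          nlinarith
        · have h3 : (3 : ℕ) ≤ m := h
          rw [hM]; exact_mod_cast h3
      have h1 : 0 ≤ α + M - 3 := by linarith
      nlinarith [mul_nonneg (sq_nonneg (α - M + 1)) h1, hα0, hm3]
  -- derivative positive on (t0, ∞)
  have hDpos : ∀ x ∈ interior (Set.Ici t0), 0 < deriv (Pquartic m α) x := by
    intro x hx
    rw [interior_Ici, Set.mem_Ioi] at hx
    rw [(hD x).deriv]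
    set D : ℝ := 4 * A4 * x ^ 3 + 3 * A3 * x ^ 2 + 2 * A2 * x + A1 with hDd
    have ht : 0 < x - t0 := by linarith
    have key : s ^ 3 * D =
        s ^ 3 * (M ^ 3 - 5 * M ^ 2 + 8 * M - 4 - M ^ 2 * α + 6 * M * α - 4 * α
            - M * α ^ 2 - α ^ 2 + α ^ 3)
        + s ^ 4 * (6 * M ^ 2 + 4 * M * α + 6 * α ^ 2 - 20 * M - 12 * α + 16) * (x - t0)
        + (9 * s ^ 6 - 15 * s ^ 5) * (x - t0) ^ 2
        + 4 * s ^ 6 * (x - t0) ^ 3 := by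
      rw [hDd, hA4, hA3, hA2, hA1, ht0, hs]
      field_simp
      ring
    have hs3 : 0 < s ^ 3 := by positivity
    have h1 : 0 < s ^ 3 * (M ^ 3 - 5 * M ^ 2 + 8 * M - 4 - M ^ 2 * α + 6 * M * α - 4 * α
        - M * α ^ 2 - α ^ 2 + α ^ 3) := mul_pos hs3 hC0
    have h2 : 0 ≤ s ^ 4 * (6 * M ^ 2 + 4 * M * α + 6 * α ^ 2 - 20 * M - 12 * α + 16)
        * (x - t0) := by positivity
    have h3 : 0 ≤ (9 * s ^ 6 - 15 * s ^ 5) * (x - t0) ^ 2 := by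
      apply mul_nonneg _ (sq_nonneg _)
      nlinarith [pow_pos hs0 5]
    have h4 : 0 ≤ 4 * s ^ 6 * (x - t0) ^ 3 := by positivity
    have hsD : 0 < s ^ 3 * D := by linarith
    nlinarith [hsD, hs3]
  have hmono : StrictMonoOn (Pquartic m α) (Set.Ici t0) :=
    strictMonoOn_of_deriv_pos (convex_Ici t0) hcont.continuousOn hDpos
  -- value at t0 is negative
  have hPt0 : Pquartic m α t0 < 0 := by
    have hval : Pquartic m α t0 = -(8 * α * (M - 1)) / s := by
      rw [hPdef]; simp only; rw [ht0, hA4, hA3, hA2, hA1, hA0, hs]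
      field_simp
      ring
    rw [hval]
    apply div_neg_of_neg_of_pos _ hs0
    nlinarith [hα0, hm2]
  -- value at 2 is positive
  have hP2 : 0 < Pquartic m α 2 := by
    rw [hPdef]; simp only [hA4, hA3, hA2, hA1, hA0, hs]
    nlinarith [mul_pos (mul_pos hα0 hα0) hα0, mul_pos hα0 hα0, mul_pos hm0 hα0,
      mul_pos (mul_pos hm0 hm0) hm0, hm2, hα0]
  have ht02 : t0 < 2 := by
    have : 0 < 1 / s := by positivity
    rw [ht0]; linarith
  -- existence via the intermediate value theorem
  obtain ⟨γ, hγmem, hγ0⟩ :=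
    intermediate_value_Ioo ht02.le hcont.continuousOn ⟨hPt0, hP2⟩
  refine ⟨γ, ⟨hγmem.1, hγ0⟩, ?_⟩
  rintro y ⟨hy1, hy2⟩
  exact hmono.injOn (Set.mem_Ici.mpr hy1.le) (Set.mem_Ici.mpr hγmem.1.le)
    (by rw [hy2, hγ0])
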